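/- Let R be a Dedekind ring with quotient field K, L = K(α) a finite separable extension with α integral over R and minimal polynomial P ∈ R[X], O_L the integral closure of R in L. Let 𝔭 be a nonzero prime of R, and let P̄ = ∏_{i=1}^r P̄_i^{l_i} be the monic irreducible factorization of P modulo 𝔭, with monic lifts P_i ∈ R[X]. Suppose P = ∏_i P_i^{l_i} + aT where a ∈ 𝔭 \ 𝔭² and T ∈ R[X] with T̄ ≠ 0. Let t_i be the exact power of P̄_i dividing T̄ and s_i = min(⌊l_i/2⌋, t_i). Then ν_𝔭(Ind_R(P)) ≥ Σ_{i=1}^r s_i · deg(P_i). -/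

import Mathlib

open Polynomial
lemma aux0 {R : Type*} [CommRing R] [IsDomain R] [IsDedekindDomain R]
    {𝔭 : Ideal R} {a : R} (ha : a ∈ 𝔭) (ha2 : a ∉ 𝔭 ^ 2) :
    ∀ c ∈ 𝔭, ∃ v ∉ 𝔭, ∃ d, v * c = a * d := by
  have h1 : 𝔭 ∣ Ideal.span {a} := Ideal.dvd_iff_le.2 (by
    simpa [Ideal.span_le] using ha)
  obtain ⟨J, hJ⟩ := h1
  have hJle : ¬ J ≤ 𝔭 := by
    intro hle
    apply ha2
    have : Ideal.span {a} ≤ 𝔭 ^ 2 := by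
      rw [hJ, pow_two]
      exact Ideal.mul_mono_right hle
    exact this (Ideal.mem_span_singleton_self a)
  obtain ⟨v, hvJ, hv𝔭⟩ := SetLike.not_le_iff_exists.1 hJle
  refine fun c hc => ⟨v, hv𝔭, ?_⟩
  have : v * c ∈ Ideal.span {a} := by
    rw [hJ, mul_comm 𝔭 J]
    exact Ideal.mul_mem_mul hvJ hc
  obtain ⟨d, hd⟩ := Ideal.mem_span_singleton'.1 this
  exact ⟨d, by rw [← hd, mul_comm d a]⟩
lemma aux1 {R : Type*} [CommRing R] {𝔭 : Ideal R} [𝔭.IsPrime] {a : R}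
    (hclear : ∀ c ∈ 𝔭, ∃ v ∉ 𝔭, ∃ d, v * c = a * d)
    (q : R[X]) (hq : ∀ n, q.coeff n ∈ 𝔭) :
    ∃ u ∉ 𝔭, ∃ S, C u * q = C a * S := by
  classical
  choose v hv d hd using fun n => hclear (q.coeff n) (hq n)
  refine ⟨∏ n ∈ q.support, v n, ?_, ∑ n ∈ q.support,
      monomial n ((∏ m ∈ q.support.erase n, v m) * d n), ?_⟩
  · exact Finset.prod_induction v (· ∉ 𝔭) (fun x y hx hy hxy =>
      ((Ideal.IsPrime.mem_or_mem ‹_› hxy).elim hx hy))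
      (fun h1 => (Ideal.IsPrime.ne_top ‹_›) (Ideal.eq_top_of_isUnit_mem _ h1 isUnit_one))
      (fun n _ => hv n)
  · ext k
    rw [coeff_C_mul, coeff_C_mul, finset_sum_coeff]
    simp only [coeff_monomial]
    rw [Finset.sum_ite_eq' q.support k]
    by_cases hk : k ∈ q.support
    · rw [if_pos hk, ← Finset.mul_prod_erase _ v hk, mul_comm (v k), mul_assoc, hd k]
      ring
    · rw [if_neg hk]
      have : q.coeff k = 0 := notMem_support_iff.1 hk
      rw [this, mul_zero, mul_zero]

lemma aux4 {k : Type*} [Field k] {r : ℕ} (p : Fin r → k[X])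
    (mon : ∀ i, (p i).Monic) (irr : ∀ i, Irreducible (p i))
    (dist : ∀ i j, i ≠ j → p i ≠ p j) (s t : Fin r → ℕ) (hst : ∀ i, s i ≤ t i)
    (Tb : k[X]) (hdvd : ∀ i, p i ^ t i ∣ Tb) : (∏ i, p i ^ s i) ∣ Tb := by
  refine Fintype.prod_dvd_of_coprime ?_ fun i => dvd_trans (pow_dvd_pow _ (hst i)) (hdvd i)
  intro i j hij
  refine IsCoprime.pow ?_
  refine (irr i).coprime_iff_not_dvd.2 fun hd => ?_
  exact dist i j hij (Polynomial.eq_of_monic_of_associated (mon i) (mon j)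
    ((irr i).associated_of_dvd (irr j) hd))

lemma aux2 {R L : Type*} [CommRing R] [Field L] [Algebra R L]
    (b c z : L) (hb : IsIntegral R b) (hc : IsIntegral R c)
    (hrel : z * z + b * z + c = 0) : IsIntegral R z := by
  let A := integralClosure R L
  have hzA : IsIntegral A z := by
    refine ⟨X ^ 2 + (C (⟨b, hb⟩ : A) * X + C (⟨c, hc⟩ : A)), ?_, ?_⟩
    · apply Polynomial.monic_X_pow_add
      refine lt_of_le_of_lt (Polynomial.degree_add_le _ _) ?_
      refine max_lt (lt_of_le_of_lt (Polynomial.degree_C_mul_X_le _) ?_)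
        (lt_of_le_of_lt (Polynomial.degree_C_le) ?_) <;> norm_num
    · simp only [eval₂_add, eval₂_pow, eval₂_X, eval₂_mul, eval₂_C]
      show z ^ 2 + ((b * z) + c) = 0
      linear_combination hrel
  exact isIntegral_trans z hzA

lemma aux3 {R L : Type*} [CommRing R] [IsDomain R] [IsIntegrallyClosed R] [Field L] [Algebra R L] [NoZeroSMulDivisors R L]
    (α : L) (hα : IsIntegral R α) (𝔭 : Ideal R) [𝔭.IsPrime]
    (a u v : R) (ha : a ∈ 𝔭) (hu : u ∉ 𝔭) (hv : v ∉ 𝔭)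
    (z : L) (F G : R[X])
    (haz : algebraMap R L a * z = algebraMap R L u * aeval α F)
    (hPFG : (minpoly R α).map (Ideal.Quotient.mk 𝔭)
      = F.map (Ideal.Quotient.mk 𝔭) * G.map (Ideal.Quotient.mk 𝔭))
    (hFb : F.map (Ideal.Quotient.mk 𝔭) ≠ 0)
    (m : ℕ) (hm : m < (G.map (Ideal.Quotient.mk 𝔭)).natDegree)
    (c : Fin m → R) (h : R[X])
    (heq : algebraMap R L v * (α ^ m * z) - ∑ j : Fin m, algebraMap R L (c j) * (α ^ (j : ℕ) * z)
      = aeval α h) : False := by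
  classical
  set κ := Ideal.Quotient.mk 𝔭 with hκ
  set cpoly : R[X] := C v * X ^ m - ∑ j : Fin m, C (c j) * X ^ (j : ℕ) with hcpoly
  have h1 : aeval α cpoly * z = aeval α h := by
    rw [← heq, hcpoly]
    simp only [map_sub, map_sum, map_mul, aeval_C, aeval_X_pow, map_pow, aeval_X,
      sub_mul, Finset.sum_mul, mul_assoc]
  have h2 : aeval α (C u * (cpoly * F)) = algebraMap R L a * aeval α h := by
    rw [← h1]
    simp only [map_mul, aeval_C]
    calc algebraMap R L u * (aeval α cpoly * aeval α F)
        = aeval α cpoly * (algebraMap R L u * aeval α F) := by ring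
      _ = aeval α cpoly * (algebraMap R L a * z) := by rw [haz]
      _ = algebraMap R L a * (aeval α cpoly * z) := by ring
  have h3 : aeval α (C u * (cpoly * F) - C a * h) = 0 := by
    rw [map_sub, h2, map_mul, aeval_C, sub_self]
  have hdvd : minpoly R α ∣ C u * (cpoly * F) - C a * h :=
    minpoly.isIntegrallyClosed_dvd hα h3
  have hdvd2 : F.map κ * G.map κ ∣ F.map κ * (C (κ u) * cpoly.map κ) := by
    rw [← hPFG]
    have hthis := Polynomial.map_dvd κ hdvd
    have hmap : (C u * (cpoly * F) - C a * h).map κ = F.map κ * (C (κ u) * cpoly.map κ) := by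
      simp only [Polynomial.map_sub, Polynomial.map_mul, Polynomial.map_C,
        (Ideal.Quotient.eq_zero_iff_mem.2 ha : κ a = 0), Polynomial.C_0, zero_mul, sub_zero]
      rw [show κ a = 0 from Ideal.Quotient.eq_zero_iff_mem.2 ha, Polynomial.C_0, zero_mul, sub_zero]
      ring
    rwa [hmap] at hthis
  have hdvd3 : G.map κ ∣ C (κ u) * cpoly.map κ := (mul_dvd_mul_iff_left hFb).1 hdvd2
  -- nonvanishing
  have hcm : (cpoly.map κ).coeff m = κ v := by
    rw [Polynomial.coeff_map, hcpoly]
    rw [Polynomial.coeff_sub, Polynomial.coeff_C_mul, Polynomial.coeff_X_pow, if_pos rfl,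
      Polynomial.finset_sum_coeff]
    have : ∀ j : Fin m, (C (c j) * X ^ (j : ℕ)).coeff m = 0 := by
      intro j
      rw [Polynomial.coeff_C_mul, Polynomial.coeff_X_pow, if_neg (by omega : ¬ m = (j : ℕ)),
        mul_zero]
    rw [Finset.sum_congr rfl fun j _ => this j]
    simp
  have hκv : κ v ≠ 0 := fun h0 => hv (Ideal.Quotient.eq_zero_iff_mem.1 h0)
  have hκu : κ u ≠ 0 := fun h0 => hu (Ideal.Quotient.eq_zero_iff_mem.1 h0)
  have hcb0 : cpoly.map κ ≠ 0 := fun h0 => hκv (by rw [← hcm, h0, Polynomial.coeff_zero])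
  have hne : C (κ u) * cpoly.map κ ≠ 0 := mul_ne_zero (Polynomial.C_ne_zero.mpr hκu) hcb0
  have hdegc : (cpoly.map κ).natDegree ≤ m := by
    refine le_trans Polynomial.natDegree_map_le ?_
    refine le_trans (Polynomial.natDegree_sub_le _ _) (max_le ?_ ?_)
    · exact le_trans (Polynomial.natDegree_C_mul_le _ _) (le_of_eq (Polynomial.natDegree_X_pow m))
    · refine Polynomial.natDegree_sum_le_of_forall_le _ _ fun j _ => ?_
      exact le_trans (Polynomial.natDegree_C_mul_le _ _)
        (le_trans (le_of_eq (Polynomial.natDegree_X_pow _)) (le_of_lt j.2))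
  have hfin : (G.map κ).natDegree ≤ m :=
    le_trans (Polynomial.natDegree_le_of_dvd hdvd3 hne)
      (le_trans (Polynomial.natDegree_C_mul_le _ _) hdegc)
  omega
lemma aux5 (n : ℕ) : ∀ x : WithBot ℕ∞, (n : WithBot ℕ∞) ≤ x → (n : ℕ∞) ≤ WithBot.unbotD 0 x
  | ⊥, h => absurd h (by simp)
  | (x : ℕ∞), h => by simpa using (by exact_mod_cast h : (n : ℕ∞) ≤ x)



/-- The length of an `R`-module `M` (the Krull dimension of its submodule lattice).  For a
Dedekind ring `R` and a nonzero prime `𝔭` of `R`, the `𝔭`-adic valuation `ν_𝔭(Ind_R(P))` of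
the index ideal `Ind_R(P) = [O_L : R[α]]_R` equals the length, over the localization `R_𝔭`,
of the localization at `𝔭` of the `R`-module `O_L ⧸ R[α]`. -/
noncomputable def moduleLength (R M : Type*) [Semiring R] [AddCommGroup M] [Module R M] : ℕ∞ :=
  WithBot.unbotD 0 (Order.krullDim (Submodule R M))

/-- **Main theorem.** Let `R` be a Dedekind ring with quotient field `K`,
`L = K(α)` finite separable with `α` integral over `R` with minimal polynomial `P ∈ R[X]`,
`O_L` the integral closure of `R` in `L`.  Let `𝔭` be a nonzero prime of `R`, let
`P̄ = ∏ P̄ᵢ^{lᵢ}` be the monic irreducible factorization of `P` mod `𝔭`, and suppose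
`P = ∏ Pᵢ^{lᵢ} + aT` with `a ∈ 𝔭 ∖ 𝔭²` and `T̄ ≠ 0`.  If `tᵢ` is the exact power of `P̄ᵢ`
dividing `T̄` and `sᵢ = min(⌊lᵢ/2⌋, tᵢ)`, then `ν_𝔭(Ind_R(P)) ≥ Σ sᵢ · deg Pᵢ`. -/
theorem stmt9 (R : Type*) [CommRing R] [IsDomain R] [IsDedekindDomain R]
    (K L : Type*) [Field K] [Field L] [Algebra R K] [IsFractionRing R K]
    [Algebra K L] [Algebra R L] [IsScalarTower R K L]
    [FiniteDimensional K L] [Algebra.IsSeparable K L]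
    (α : L) (hα : IsIntegral R α) (hgen : Algebra.adjoin K {α} = ⊤)
    (P : R[X]) (hP : P = minpoly R α)
    (𝔭 : Ideal R) [𝔭.IsPrime] (h𝔭 : 𝔭 ≠ ⊥)
    (r : ℕ) (Pl : Fin r → R[X]) (l t : Fin r → ℕ)
    (hmon : ∀ i, (Pl i).Monic)
    (hirr : ∀ i, Irreducible ((Pl i).map (Ideal.Quotient.mk 𝔭)))
    (hdist : ∀ i j, i ≠ j →
      (Pl i).map (Ideal.Quotient.mk 𝔭) ≠ (Pl j).map (Ideal.Quotient.mk 𝔭))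
    (a : R) (ha : a ∈ 𝔭) (ha2 : a ∉ 𝔭 ^ 2) (T : R[X])
    (hfact : P = (∏ i, Pl i ^ l i) + C a * T)
    (hT : T.map (Ideal.Quotient.mk 𝔭) ≠ 0)
    (ht : ∀ i, ((Pl i).map (Ideal.Quotient.mk 𝔭)) ^ t i ∣ T.map (Ideal.Quotient.mk 𝔭) ∧
      ¬ ((Pl i).map (Ideal.Quotient.mk 𝔭)) ^ (t i + 1) ∣ T.map (Ideal.Quotient.mk 𝔭)) :
    ((∑ i, min (l i / 2) (t i) * (Pl i).natDegree : ℕ) : ℕ∞) ≤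
      moduleLength (Localization.AtPrime 𝔭)
        (LocalizedModule 𝔭.primeCompl
          (↥(Subalgebra.toSubmodule (integralClosure R L)) ⧸
            Submodule.comap (Subalgebra.toSubmodule (integralClosure R L)).subtype
              (Subalgebra.toSubmodule (Algebra.adjoin R {α})))) := by
  classical
  haveI hmax : 𝔭.IsMaximal := Ideal.IsPrime.isMaximal ‹_› h𝔭
  have hinj : Function.Injective (algebraMap R L) := by
    rw [IsScalarTower.algebraMap_eq R K L]
    exact (algebraMap K L).injective.comp (IsFractionRing.injective R K)
  haveI : NoZeroSMulDivisors R L := ⟨fun {c x} h => by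
    rw [Algebra.smul_def, mul_eq_zero] at h
    exact h.imp_left fun h' => (map_eq_zero_iff _ hinj).1 h'⟩
  set κ := Ideal.Quotient.mk 𝔭 with hκdef
  set s : Fin r → ℕ := fun i => min (l i / 2) (t i) with hsdef
  have hs2 : ∀ i, 2 * s i ≤ l i := by
    intro i
    have h1 := Nat.div_mul_le_self (l i) 2
    have h2 : s i ≤ l i / 2 := min_le_left _ _
    omega
  have hsl : ∀ i, s i ≤ l i := fun i => by have := hs2 i; omega
  have hst : ∀ i, s i ≤ t i := fun i => min_le_right _ _
  set F : R[X] := ∏ i, Pl i ^ (l i - s i) with hF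
  set G : R[X] := ∏ i, Pl i ^ s i with hG
  set E : R[X] := ∏ i, Pl i ^ (l i - 2 * s i) with hE
  set N : ℕ := ∑ i, s i * (Pl i).natDegree with hN
  have hκa : κ a = 0 := Ideal.Quotient.eq_zero_iff_mem.2 ha
  have monp : ∀ i, ((Pl i).map κ).Monic := fun i => (hmon i).map κ
  have hPmap : P.map κ = F.map κ * G.map κ := by
    rw [hfact, Polynomial.map_add, Polynomial.map_mul, Polynomial.map_C, hκa,
      Polynomial.C_0, zero_mul, add_zero, hF, hG, Polynomial.map_prod, Polynomial.map_prod,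
      Polynomial.map_prod, ← Finset.prod_mul_distrib]
    refine Finset.prod_congr rfl fun i _ => ?_
    rw [Polynomial.map_pow, Polynomial.map_pow, Polynomial.map_pow, ← pow_add]
    congr 1
    have := hsl i
    omega
  have hFbmon : (F.map κ).Monic := by
    rw [hF, Polynomial.map_prod]
    exact monic_prod_of_monic _ _ fun i _ => by
      rw [Polynomial.map_pow]; exact (monp i).pow _
  have hFb : F.map κ ≠ 0 := hFbmon.ne_zero
  have hdegG : (G.map κ).natDegree = N := by
    rw [hG, Polynomial.map_prod, Polynomial.natDegree_prod_of_monic _ _ fun i _ => by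
      rw [Polynomial.map_pow]; exact (monp i).pow _]
    refine Finset.sum_congr rfl fun i _ => ?_
    rw [Polynomial.map_pow, Polynomial.natDegree_pow, (hmon i).natDegree_map]
  have hFeq : F = E * G := by
    rw [hF, hE, hG, ← Finset.prod_mul_distrib]
    refine Finset.prod_congr rfl fun i _ => ?_
    rw [← pow_add]
    congr 1
    have := hs2 i
    omega
  have hGT : G.map κ ∣ T.map κ := by
    have := @aux4 (R ⧸ 𝔭) (Ideal.Quotient.field 𝔭) r (fun i => (Pl i).map κ) monp hirr hdist
      s t hst (T.map κ) (fun i => (ht i).1)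
    rw [hG, Polynomial.map_prod]
    simpa only [Polynomial.map_pow] using this
  have hFTE : F.map κ ∣ (T * E).map κ := by
    rw [Polynomial.map_mul, hFeq, Polynomial.map_mul, mul_comm (T.map κ)]
    exact mul_dvd_mul_left _ hGT
  obtain ⟨Wb, hWb⟩ := hFTE
  obtain ⟨W, hW⟩ := Polynomial.map_surjective κ Ideal.Quotient.mk_surjective Wb
  have hq0 : ∀ n, (T * E - F * W).coeff n ∈ 𝔭 := by
    intro n
    have hz : (T * E - F * W).map κ = 0 := by
      have h2 : (F * W).map κ = F.map κ * Wb := by rw [Polynomial.map_mul, hW]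
      rw [Polynomial.map_sub, h2, ← hWb, sub_self]
    have := congrArg (fun p => Polynomial.coeff p n) hz
    simp only [Polynomial.coeff_map, Polynomial.coeff_zero] at this
    exact Ideal.Quotient.eq_zero_iff_mem.1 this
  obtain ⟨u, hu, S, hS⟩ := aux1 (aux0 ha ha2) _ hq0
  -- the element z
  have ha0 : a ≠ 0 := fun h0 => ha2 (by rw [h0]; exact zero_mem _)
  have haL : algebraMap R L a ≠ 0 := fun h0 => ha0 (hinj (by rw [h0, map_zero]))
  set z : L := (algebraMap R L u * aeval α F) / (algebraMap R L a) with hzdef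
  have haz : algebraMap R L a * z = algebraMap R L u * aeval α F := by
    rw [hzdef, mul_div_cancel₀ _ haL]
  have haP : aeval α P = 0 := by rw [hP]; exact minpoly.aeval R α
  have hFF : aeval α F * aeval α F = -(algebraMap R L a * aeval α (T * E)) := by
    have hpoly : F * F = (P - C a * T) * E := by
      have h1 : ∏ i, Pl i ^ l i = P - C a * T := by rw [hfact]; ring
      rw [← h1, hF, hE, ← Finset.prod_mul_distrib, ← Finset.prod_mul_distrib]
      refine Finset.prod_congr rfl fun i _ => ?_
      rw [← pow_add, ← pow_add]
      congr 1
      have := hs2 i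
      omega
    have h3 := congrArg (aeval α) hpoly
    simp only [map_mul, map_sub, aeval_C] at h3
    rw [haP] at h3
    rw [map_mul]
    linear_combination h3
  have hS' : algebraMap R L u * aeval α (T * E)
      = algebraMap R L u * aeval α F * aeval α W + algebraMap R L a * aeval α S := by
    have h4 := congrArg (aeval α) hS
    simp only [map_mul, map_sub, aeval_C] at h4
    rw [map_mul]
    linear_combination h4
  have hrel : z * z + (algebraMap R L u * aeval α W) * z + (algebraMap R L u * aeval α S)
      = 0 := by
    have hkey : algebraMap R L a * (algebraMap R L a *
        (z * z + (algebraMap R L u * aeval α W) * z + (algebraMap R L u * aeval α S))) = 0 := by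
      linear_combination (algebraMap R L a * z + algebraMap R L u * aeval α F
          + algebraMap R L a * (algebraMap R L u * aeval α W)) * haz
        + algebraMap R L u ^ 2 * hFF - algebraMap R L a * algebraMap R L u * hS'
    rcases mul_eq_zero.1 hkey with h | h
    · exact absurd h haL
    rcases mul_eq_zero.1 h with h | h
    · exact absurd h haL
    exact h
  have hadjint : ∀ q : R[X], IsIntegral R (aeval α q) := by
    intro q
    have hmem : aeval α q ∈ Algebra.adjoin R {α} := by
      rw [Algebra.adjoin_singleton_eq_range_aeval]
      exact ⟨q, rfl⟩
    have hle : Algebra.adjoin R {α} ≤ integralClosure R L :=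
      Algebra.adjoin_le (Set.singleton_subset_iff.2 ((mem_integralClosure_iff R L).2 hα))
    exact (mem_integralClosure_iff R L).1 (hle hmem)
  have hzI : IsIntegral R z := by
    refine aux2 _ _ z ?_ ?_ hrel
    · have : algebraMap R L u * aeval α W = aeval α (C u * W) := by rw [map_mul, aeval_C]
      rw [this]; exact hadjint _
    · have : algebraMap R L u * aeval α S = aeval α (C u * S) := by rw [map_mul, aeval_C]
      rw [this]; exact hadjint _
  -- the module elements
  have hxint : ∀ j : ℕ, α ^ j * z ∈ Subalgebra.toSubmodule (integralClosure R L) := by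
    intro j
    rw [Subalgebra.mem_toSubmodule, mem_integralClosure_iff]
    exact (hα.pow j).mul hzI
  set O : Submodule R L := Subalgebra.toSubmodule (integralClosure R L) with hO
  set A0 : Submodule R O :=
    Submodule.comap O.subtype (Subalgebra.toSubmodule (Algebra.adjoin R {α})) with hA0
  set xe : ℕ → O := fun j => ⟨α ^ j * z, hxint j⟩ with hxe
  set ξ : ℕ → (O ⧸ A0) := fun j => Submodule.Quotient.mk (xe j) with hξ
  -- independence
  have hind : ∀ m : ℕ, m < N → ∀ v, v ∉ 𝔭 →
      v • ξ m ∉ Submodule.span R (Set.range fun j : Fin m => ξ (j : ℕ)) := by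
    intro m hm v hv hmem
    have himg : (Set.range fun j : Fin m => ξ (j : ℕ))
        = A0.mkQ '' (Set.range fun j : Fin m => xe (j : ℕ)) := by
      rw [← Set.range_comp]
      rfl
    rw [himg, Submodule.span_image] at hmem
    obtain ⟨y, hy, hyeq⟩ := hmem
    have hvmk : v • ξ m = A0.mkQ (v • xe m) := by
      rw [hξ]
      simp [Submodule.Quotient.mk_smul]
    rw [hvmk] at hyeq
    have h5 : y - v • xe m ∈ A0 := by simpa using (Submodule.Quotient.eq A0).1 hyeq
    have hmem2 : v • xe m - y ∈ A0 := by simpa [neg_sub] using A0.neg_mem h5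
    obtain ⟨c, hc⟩ := (Submodule.mem_span_range_iff_exists_fun R).1 hy
    have hval : algebraMap R L v * (α ^ m * z)
        - ∑ j : Fin m, algebraMap R L (c j) * (α ^ (j : ℕ) * z) ∈ Algebra.adjoin R {α} := by
      have h1 : ((v • xe m - y : O) : L) = algebraMap R L v * (α ^ m * z)
          - ∑ j : Fin m, algebraMap R L (c j) * (α ^ (j : ℕ) * z) := by
        rw [← hc]
        push_cast
        simp [Algebra.smul_def, hxe]
      rw [← h1]
      exact hmem2
    rw [Algebra.adjoin_singleton_eq_range_aeval] at hval
    obtain ⟨h, hh⟩ := hval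
    have hPFG : (minpoly R α).map κ = F.map κ * G.map κ := by rw [← hP]; exact hPmap
    exact aux3 α hα 𝔭 a u v ha hu hv z F G haz hPFG hFb m (by rw [hdegG]; exact hm) c h hh.symm
  -- localization
  set fℓ := LocalizedModule.mkLinearMap 𝔭.primeCompl (O ⧸ A0) with hfℓ
  haveI : IsLocalizedModule 𝔭.primeCompl fℓ :=
    inferInstanceAs (IsLocalizedModule 𝔭.primeCompl (LocalizedModule.mkLinearMap 𝔭.primeCompl _))
  set Wc : Fin (N + 1) → Submodule (Localization.AtPrime 𝔭)
      (LocalizedModule 𝔭.primeCompl (O ⧸ A0)) :=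
    fun m => Submodule.span (Localization.AtPrime 𝔭) (fℓ '' (ξ '' Set.Iio (m : ℕ))) with hWc
  have hstep : ∀ i : Fin N, Wc i.castSucc < Wc i.succ := by
    intro i
    refine lt_of_le_of_ne (Submodule.span_mono (Set.image_mono (Set.image_mono ?_)))
      fun heq => ?_
    · intro x hx
      simp only [Set.mem_Iio, Fin.coe_castSucc, Fin.val_succ] at hx ⊢
      omega
    · have hmem : fℓ (ξ (i : ℕ)) ∈ Wc i.succ := by
        refine Submodule.subset_span ⟨ξ (i : ℕ), ⟨(i : ℕ), ?_, rfl⟩, rfl⟩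
        simp only [Set.mem_Iio, Fin.val_succ]
        omega
      rw [← heq] at hmem
      have hset : (ξ '' Set.Iio ((i.castSucc : Fin (N+1)) : ℕ))
          = Set.range fun j : Fin (i : ℕ) => ξ (j : ℕ) := by
        ext w
        constructor
        · rintro ⟨n, hn, rfl⟩
          simp only [Set.mem_Iio, Fin.coe_castSucc] at hn
          exact ⟨⟨n, hn⟩, rfl⟩
        · rintro ⟨j, rfl⟩
          exact ⟨(j : ℕ), by simpa using j.2, rfl⟩
      simp only [hWc] at hmem
      rw [hset, ← Submodule.localized'_span (Localization.AtPrime 𝔭) 𝔭.primeCompl fℓ] at hmem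
      rw [Submodule.mem_localized' (Localization.AtPrime 𝔭) 𝔭.primeCompl fℓ] at hmem
      obtain ⟨y, hy, sden, hseq⟩ := hmem
      have h1 : fℓ (ξ (i : ℕ)) = IsLocalizedModule.mk' fℓ (ξ (i : ℕ)) (1 : 𝔭.primeCompl) := by
        rw [IsLocalizedModule.mk'_one]
      rw [h1, IsLocalizedModule.mk'_eq_mk'_iff] at hseq
      obtain ⟨cden, hcden⟩ := hseq
      have hfin : ((cden * sden : 𝔭.primeCompl) : R) • ξ (i : ℕ) ∈
          Submodule.span R (Set.range fun j : Fin (i : ℕ) => ξ (j : ℕ)) := by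
        have h2 : (cden : R) • (sden : R) • ξ (i : ℕ) = (cden : R) • (1 : R) • y := by
          simpa [Submonoid.smul_def] using hcden
        rw [Submonoid.coe_mul, mul_smul, h2, one_smul]
        exact Submodule.smul_mem _ _ hy
      exact hind (i : ℕ) i.2 _ (cden * sden).2 hfin
  -- conclude
  let series : LTSeries (Submodule (Localization.AtPrime 𝔭)
      (LocalizedModule 𝔭.primeCompl (O ⧸ A0))) := ⟨N, fun m => Wc m, hstep⟩
  have hkd := Order.LTSeries.length_le_krullDim series
  have hlen : series.length = N := rfl
  rw [hlen] at hkd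
  show (N : ℕ∞) ≤ moduleLength _ _
  unfold moduleLength
  exact aux5 N _ hkd
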